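/- Let η, η' ∈ (0,1]. There exists a constant C > 0 (depending only on η and η') such that for every ε ∈ (0,1) and every r > 0, (log((r+ε)/(1+εr)) − log r)² · r ≤ C·(ε^{η'}·r^{1+η'} + ε^{η}·r^{1−η}). -/
import Mathlib

open Real

/-- Key pointwise bound: `(log(1+x))² ≤ (1 + 8/α²) x^α` for `α ∈ (0,1]`, `x ≥ 0`. -/
lemma log_sq_le_rpow (α x : ℝ) (hα : 0 < α) (hα1 : α ≤ 1) (hx : 0 ≤ x) :
    (Real.log (1 + x)) ^ 2 ≤ (1 + 8 / α ^ 2) * x ^ α := by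
  have h1x : (0:ℝ) < 1 + x := by linarith
  have hC : (1:ℝ) ≤ 1 + 8 / α ^ 2 := by
    have : 0 < 8 / α ^ 2 := by positivity
    linarith
  rcases eq_or_lt_of_le hx with h0 | h0
  · simp only [← h0, add_zero, Real.log_one, ne_eq]
    norm_num
    positivity
  rcases le_or_gt x 1 with h | h
  · -- small x: log(1+x) ≤ x, and x² ≤ x^α
    have hl : Real.log (1 + x) ≤ x := by
      have := Real.log_le_sub_one_of_pos h1x; linarith
    have hl0 : 0 ≤ Real.log (1 + x) := Real.log_nonneg (by linarith)
    have hsq : (Real.log (1 + x)) ^ 2 ≤ x ^ 2 := by nlinarith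
    have h2 : x ^ (2:ℝ) ≤ x ^ α :=
      Real.rpow_le_rpow_of_exponent_ge h0 h (by linarith)
    rw [show (2:ℝ) = ((2:ℕ):ℝ) by norm_num, Real.rpow_natCast] at h2
    have hxα : 0 ≤ x ^ α := Real.rpow_nonneg hx α
    have h2' : x ^ α ≤ (1 + 8 / α ^ 2) * x ^ α := le_mul_of_one_le_left hxα hC
    linarith
  · -- large x: log(1+x) ≤ (2/α)(1+x)^{α/2}
    have hβ : 0 < α / 2 := by linarith
    have hP : 0 < (1 + x) ^ (α / 2) := Real.rpow_pos_of_pos h1x _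
    have hb : Real.log (1 + x) ≤ (2 / α) * (1 + x) ^ (α / 2) := by
      have h1 : Real.log ((1 + x) ^ (α / 2)) ≤ (1 + x) ^ (α / 2) - 1 :=
        Real.log_le_sub_one_of_pos hP
      rw [Real.log_rpow h1x] at h1
      have : α / 2 * Real.log (1 + x) ≤ (1 + x) ^ (α / 2) := by linarith
      rw [div_mul_eq_mul_div, le_div_iff₀ hα]
      nlinarith
    have hl0 : 0 ≤ Real.log (1 + x) := Real.log_nonneg (by linarith)
    have hsq : (Real.log (1 + x)) ^ 2 ≤ (4 / α ^ 2) * (1 + x) ^ α := by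
      have h2 : ((1 + x) ^ (α / 2)) ^ 2 = (1 + x) ^ α := by
        rw [← Real.rpow_natCast ((1 + x) ^ (α / 2)) 2, ← Real.rpow_mul h1x.le]
        norm_num
      calc (Real.log (1 + x)) ^ 2 ≤ ((2 / α) * (1 + x) ^ (α / 2)) ^ 2 :=
            pow_le_pow_left₀ hl0 hb 2
        _ = (4 / α ^ 2) * (1 + x) ^ α := by
            rw [mul_pow, h2, div_pow]; norm_num
    have h3 : (1 + x) ^ α ≤ 2 * x ^ α := by
      have h4 : (1 + x) ^ α ≤ (2 * x) ^ α :=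
        Real.rpow_le_rpow h1x.le (by linarith) hα.le
      have h5 : (2 * x) ^ α = 2 ^ α * x ^ α := Real.mul_rpow (by norm_num) hx
      have h6 : (2:ℝ) ^ α ≤ 2 ^ (1:ℝ) :=
        Real.rpow_le_rpow_of_exponent_le (by norm_num) hα1
      have hxα : 0 ≤ x ^ α := Real.rpow_nonneg hx α
      rw [Real.rpow_one] at h6
      nlinarith
    have hxα : 0 ≤ x ^ α := Real.rpow_nonneg hx α
    have hα2 : 0 < 4 / α ^ 2 := by positivity
    have h9 : 4 / α ^ 2 * (1 + x) ^ α ≤ 4 / α ^ 2 * (2 * x ^ α) :=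
      mul_le_mul_of_nonneg_left h3 hα2.le
    have h10 : 4 / α ^ 2 * (2 * x ^ α) ≤ (1 + 8 / α ^ 2) * x ^ α := by
      have hd : (1 + 8 / α ^ 2) * x ^ α - 4 / α ^ 2 * (2 * x ^ α) = x ^ α := by
        field_simp
        ring
      linarith
    linarith

/-- For `η, η' ∈ (0,1]` there is `C > 0` such that for every `ε ∈ (0,1)` and `r > 0`,
`(log((r+ε)/(1+εr)) − log r)² r ≤ C(ε^{η'} r^{1+η'} + ε^{η} r^{1−η})`. -/
theorem stmt_8 (η η' : ℝ) (hη : η ∈ Set.Ioc (0:ℝ) 1) (hη' : η' ∈ Set.Ioc (0:ℝ) 1) :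
    ∃ C : ℝ, 0 < C ∧ ∀ ε ∈ Set.Ioo (0:ℝ) 1, ∀ r : ℝ, 0 < r →
      (Real.log ((r + ε) / (1 + ε * r)) - Real.log r) ^ 2 * r ≤
        C * (ε ^ η' * r ^ (1 + η') + ε ^ η * r ^ (1 - η)) := by
  obtain ⟨hη0, hη1⟩ := hη
  obtain ⟨hη'0, hη'1⟩ := hη'
  refine ⟨1 + 8 / η ^ 2 + 8 / η' ^ 2, by positivity, ?_⟩
  rintro ε ⟨hε0, hε1⟩ r hr
  set a := Real.log (1 + ε / r) with ha_def
  set b := Real.log (1 + ε * r) with hb_def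
  have hεr : 0 < ε / r := by positivity
  have h1εr : (0:ℝ) < 1 + ε * r := by positivity
  have hrε : (0:ℝ) < r + ε := by linarith
  have heq : Real.log ((r + ε) / (1 + ε * r)) - Real.log r = a - b := by
    rw [Real.log_div hrε.ne' h1εr.ne', ha_def, hb_def]
    have : 1 + ε / r = (r + ε) / r := by field_simp
    rw [this, Real.log_div hrε.ne' hr.ne']
    ring
  rw [heq]
  have ha0 : 0 ≤ a := Real.log_nonneg (by linarith)
  have hb0 : 0 ≤ b := Real.log_nonneg (by nlinarith)
  have hab : (a - b) ^ 2 ≤ a ^ 2 + b ^ 2 := by nlinarith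
  have hA : a ^ 2 ≤ (1 + 8 / η ^ 2) * (ε / r) ^ η :=
    log_sq_le_rpow η (ε / r) hη0 hη1 hεr.le
  have hB : b ^ 2 ≤ (1 + 8 / η' ^ 2) * (ε * r) ^ η' :=
    log_sq_le_rpow η' (ε * r) hη'0 hη'1 (by positivity)
  have h1 : (ε / r) ^ η * r = ε ^ η * r ^ (1 - η) := by
    rw [Real.div_rpow hε0.le hr.le, div_mul_eq_mul_div, mul_div_assoc,
      Real.rpow_sub hr, Real.rpow_one]
  have h2 : (ε * r) ^ η' * r = ε ^ η' * r ^ (1 + η') := by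
    rw [Real.mul_rpow hε0.le hr.le, mul_assoc, ← Real.rpow_add_one hr.ne',
      add_comm η' 1]
  have hT1 : 0 ≤ ε ^ η * r ^ (1 - η) := by positivity
  have hT2 : 0 ≤ ε ^ η' * r ^ (1 + η') := by positivity
  have hc1 : 0 < 8 / η ^ 2 := by positivity
  have hc2 : 0 < 8 / η' ^ 2 := by positivity
  nlinarith [mul_le_mul_of_nonneg_right hA hr.le, mul_le_mul_of_nonneg_right hB hr.le,
    mul_le_mul_of_nonneg_right hab hr.le, h1, h2]
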